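/- Let M be a matroid of rank r on a finite ground set E, and let X be an r-element subset of E with r_M(X) = r − 1, where r_M denotes the rank function of M. Then there is a unique circuit C of M with C ⊆ X and a unique cocircuit D of M with D ⊆ E ∖ X, and for all e ∈ X and f ∈ E ∖ X, the set X − e + f is dependent in M if and only if e ∈ X ∖ C or f ∈ (E ∖ X) ∖ D. -/

import Mathlib

open Filter Set

/-- The rank of a matroid `M`: the (common) cardinality of a base of `M`. -/
noncomputable def Matroid.rkt {α : Type*} (M : Matroid α) : ℕ :=
  sSup {k | ∃ B, M.IsBase B ∧ B.ncard = k}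

/-- A circuit of a matroid: a minimal dependent set. -/
def Matroid.IsMinDep {α : Type*} (M : Matroid α) (C : Set α) : Prop :=
  M.Dep C ∧ ∀ D, D ⊂ C → ¬ M.Dep D

/-- A hyperplane of a matroid: a maximal proper flat. -/
def Matroid.IsHyperplane {α : Type*} (M : Matroid α) (H : Set α) : Prop :=
  M.IsFlat H ∧ H ⊂ M.E ∧ ∀ F, M.IsFlat F → H ⊂ F → F = M.E

/-- A circuit-hyperplane of a matroid: a set that is both a circuit and a hyperplane. -/
def Matroid.IsCircuitHyperplane {α : Type*} (M : Matroid α) (X : Set α) : Prop :=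
  M.IsMinDep X ∧ M.IsHyperplane X

/-- `W(M)`: the set of circuit-hyperplanes of `M`. -/
def matroidW {α : Type*} (M : Matroid α) : Set (Set α) :=
  {X | M.IsCircuitHyperplane X}

/-- `U(M)`: the dependent subsets of the ground set of cardinality `rk(M)`
that are not circuit-hyperplanes. -/
def matroidU {α : Type*} (M : Matroid α) : Set (Set α) :=
  {X | X.ncard = M.rkt ∧ M.Dep X ∧ ¬ M.IsCircuitHyperplane X}

/-- The set of matroids with ground set `{1, …, n}` (modelled as `Fin n`). -/
def matroidsOn (n : ℕ) : Set (Matroid (Fin n)) := {M | M.E = Set.univ}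

/-- The set of matroids with ground set `{1, …, n}` and rank `r`. -/
def matroidsOnRank (n r : ℕ) : Set (Matroid (Fin n)) :=
  {M | M.E = Set.univ ∧ M.rkt = r}

/-- The rank of a set `X` in a matroid `M`: the largest cardinality of an independent
subset of `X`. -/
noncomputable def Matroid.rSet {α : Type*} (M : Matroid α) (X : Set α) : ℕ :=
  sSup {k | ∃ I, M.Indep I ∧ I ⊆ X ∧ I.ncard = k}

private lemma encard_lt_of_ncard_lt {α : Type*} {s t : Set α} (hs : s.Finite) (ht : t.Finite)
    (h : s.ncard < t.ncard) : s.encard < t.encard := by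
  rw [hs.encard_eq_coe_toFinset_card, ht.encard_eq_coe_toFinset_card]
  rw [Set.ncard_eq_toFinset_card s hs, Set.ncard_eq_toFinset_card t ht] at h
  exact_mod_cast h

private lemma indep_card_le_of_subset_closure {α : Type*} {M : Matroid α} {I J : Set α}
    (hI : M.Indep I) (hJ : M.Indep J) (hIfin : I.Finite) (hJfin : J.Finite)
    (hsub : I ⊆ M.closure J) : I.ncard ≤ J.ncard := by
  by_contra hlt
  push_neg at hlt
  obtain ⟨e, he, hins⟩ := hJ.augment hI (encard_lt_of_ncard_lt hJfin hIfin hlt)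
  rw [hJ.insert_indep_iff_of_notMem he.2] at hins
  exact hins.2 (hsub he.1)

private lemma rkt_eq_of_base {α : Type*} {M : Matroid α} {B : Set α} (hB : M.IsBase B) :
    M.rkt = B.ncard := by
  have h : {k | ∃ B', M.IsBase B' ∧ B'.ncard = k} = {B.ncard} := by
    ext k
    simp only [Set.mem_setOf_eq, Set.mem_singleton_iff]
    exact ⟨fun ⟨B', hB', hk⟩ => hk ▸ hB'.ncard_eq_ncard_of_isBase hB, fun hk => ⟨B, hB, hk.symm⟩⟩
  rw [Matroid.rkt, h, csSup_singleton]

private lemma rSet_eq_of_basis {α : Type*} {M : Matroid α} {I X : Set α} (hXfin : X.Finite)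
    (hI : M.IsBasis I X) : M.rSet X = I.ncard := by
  have hmem : I.ncard ∈ {k | ∃ J, M.Indep J ∧ J ⊆ X ∧ J.ncard = k} := ⟨I, hI.indep, hI.subset, rfl⟩
  have hub : ∀ k ∈ {k | ∃ J, M.Indep J ∧ J ⊆ X ∧ J.ncard = k}, k ≤ I.ncard := by
    rintro k ⟨J, hJ, hJX, rfl⟩
    by_contra hlt
    push_neg at hlt
    obtain ⟨e, he, hins⟩ := hI.indep.augment hJ
      (encard_lt_of_ncard_lt (hXfin.subset hI.subset) (hXfin.subset hJX) hlt)
    exact (hI.insert_dep ⟨hJX he.1, he.2⟩).1 hins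
  exact le_antisymm (csSup_le ⟨_, hmem⟩ hub) (le_csSup ⟨I.ncard, hub⟩ hmem)

/-- Let `M` be a matroid of rank `r` on a finite ground set `E` and let `X`
be an `r`-element subset with `r_M(X) = r − 1`. Then there is a unique circuit `C ⊆ X` and a
unique cocircuit `D ⊆ E ∖ X`, and for all `e ∈ X` and `f ∈ E ∖ X`, the set `X − e + f` is
dependent iff `e ∈ X ∖ C` or `f ∈ (E ∖ X) ∖ D`. -/
theorem unique_circuit_cocircuit {α : Type*} (M : Matroid α) (hfin : M.E.Finite)
    (X : Finset α) (hXE : (X : Set α) ⊆ M.E) (hX : X.card = M.rkt)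
    (hrank : M.rSet (X : Set α) + 1 = M.rkt) :
    ∃ C D : Set α,
      (M.IsMinDep C ∧ C ⊆ (X : Set α)) ∧
      (∀ C', M.IsMinDep C' → C' ⊆ (X : Set α) → C' = C) ∧
      (M✶.IsMinDep D ∧ D ⊆ M.E \ (X : Set α)) ∧
      (∀ D', M✶.IsMinDep D' → D' ⊆ M.E \ (X : Set α) → D' = D) ∧
      ∀ e ∈ X, ∀ f ∈ M.E \ (X : Set α),
        (M.Dep (insert f ((X : Set α) \ {e})) ↔
          e ∈ (X : Set α) \ C ∨ f ∈ (M.E \ (X : Set α)) \ D) := by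
  classical
  have hXfin : (X : Set α).Finite := X.finite_toSet
  obtain ⟨B0, hB0⟩ := M.exists_isBase
  have hr : M.rkt = B0.ncard := rkt_eq_of_base hB0
  obtain ⟨I, hI⟩ := M.exists_isBasis (X : Set α) hXE
  have hIfin : I.Finite := hXfin.subset hI.subset
  have hIcard : I.ncard + 1 = M.rkt := by rw [← hrank, rSet_eq_of_basis hXfin hI]
  have hXcard : (X : Set α).ncard = M.rkt := by rw [Set.ncard_coe_finset]; exact hX
  have hXdep : M.Dep (X : Set α) := by
    rw [← Matroid.not_indep_iff hXE]
    intro h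
    have heq := hI.eq_of_subset_indep h hI.subset Set.Subset.rfl
    rw [heq, hXcard] at hIcard
    omega
  -- the element x with X \ I = {x}
  have hdiff : ((X : Set α) \ I).ncard = 1 := by
    rw [Set.ncard_diff hI.subset hIfin, hXcard]; omega
  obtain ⟨x, hxeq⟩ := Set.ncard_eq_one.mp hdiff
  have hxX : x ∈ (X : Set α) := by
    have hx : x ∈ (X : Set α) \ I := by rw [hxeq]; exact rfl
    exact hx.1
  have hIx : (X : Set α) \ {x} = I := by
    rw [← hxeq, Set.diff_diff_cancel_left hI.subset]
  -- the candidate circuit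
  set Cs : Set α := {y | y ∈ (X : Set α) ∧ M.Indep ((X : Set α) \ {y})} with hCsdef
  have hxCs : x ∈ Cs := ⟨hxX, by rw [hIx]; exact hI.indep⟩
  have hclCs : ∀ y ∈ Cs, M.closure ((X : Set α) \ {y}) = M.closure (X : Set α) := by
    rintro y ⟨hyX, hyI⟩
    have hy : y ∈ M.closure ((X : Set α) \ {y}) := by
      have hd : M.Dep (insert y ((X : Set α) \ {y})) := by
        rwa [Set.insert_diff_singleton, Set.insert_eq_of_mem hyX]
      exact (hyI.insert_dep_iff.mp hd).1
    calc M.closure ((X : Set α) \ {y})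
        = M.closure (insert y ((X : Set α) \ {y})) :=
          (Matroid.closure_insert_eq_of_mem_closure hy).symm
      _ = M.closure (X : Set α) := by
          rw [Set.insert_diff_singleton, Set.insert_eq_of_mem hyX]
  -- uniqueness of circuits in X
  have huniq : ∀ C', M.IsMinDep C' → C' ⊆ (X : Set α) → C' = Cs := by
    intro C' hC' hC'X
    have hC'E : C' ⊆ M.E := hC'X.trans hXE
    apply Set.Subset.antisymm
    · intro y hy
      refine ⟨hC'X hy, ?_⟩
      by_contra hdep'
      have hXyE : (X : Set α) \ {y} ⊆ M.E := Set.diff_subset.trans hXE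
      rw [Matroid.not_indep_iff hXyE] at hdep'
      obtain ⟨J, hJ⟩ := M.exists_isBasis ((X : Set α) \ {y}) hXyE
      have hJne : J ≠ (X : Set α) \ {y} := fun h => hdep'.1 (h ▸ hJ.indep)
      have hJss : J ⊂ (X : Set α) \ {y} := hJ.subset.ssubset_of_ne hJne
      have hCyind : M.Indep (C' \ {y}) := by
        have hss : C' \ {y} ⊂ C' := Set.sdiff_singleton_ssubset.mpr hy
        have hnd := hC'.2 _ hss
        rwa [Matroid.not_dep_iff (Set.diff_subset.trans hC'E)] at hnd
      have hyC'cl : y ∈ M.closure (C' \ {y}) := by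
        have hd : M.Dep (insert y (C' \ {y})) := by
          rw [Set.insert_diff_singleton, Set.insert_eq_of_mem hy]; exact hC'.1
        exact (hCyind.insert_dep_iff.mp hd).1
      have hycl : y ∈ M.closure ((X : Set α) \ {y}) :=
        M.closure_subset_closure (Set.diff_subset_diff_left hC'X) hyC'cl
      have hclXy : M.closure ((X : Set α) \ {y}) = M.closure (X : Set α) := by
        calc M.closure ((X : Set α) \ {y})
            = M.closure (insert y ((X : Set α) \ {y})) :=
              (Matroid.closure_insert_eq_of_mem_closure hycl).symm
          _ = M.closure (X : Set α) := by
              rw [Set.insert_diff_singleton, Set.insert_eq_of_mem (hC'X hy)]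
      have hIcl : I ⊆ M.closure J := by
        have h1 : M.closure J = M.closure ((X : Set α) \ {y}) := hJ.closure_eq_closure
        have h2 : I ⊆ M.closure (X : Set α) := hI.subset.trans (M.subset_closure _ hXE)
        rw [h1, hclXy]; exact h2
      have hJfin : J.Finite := hXfin.subset (hJ.subset.trans Set.diff_subset)
      have hle := indep_card_le_of_subset_closure hI.indep hJ.indep hIfin hJfin hIcl
      have hlt : J.ncard < ((X : Set α) \ {y}).ncard :=
        Set.ncard_lt_ncard hJss (hXfin.subset Set.diff_subset)
      have hXy : ((X : Set α) \ {y}).ncard = (X : Set α).ncard - 1 :=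
        Set.ncard_diff_singleton_of_mem (hC'X hy)
      omega
    · rintro y ⟨hyX, hyind⟩
      by_contra hyC'
      exact hC'.1.1 (hyind.subset (Set.subset_diff_singleton hC'X hyC'))
  -- existence of a circuit in X
  have hCscirc : M.IsMinDep Cs := by
    have hne : (X.powerset.filter (fun s : Finset α => M.Dep (s : Set α))).Nonempty :=
      ⟨X, by simp [hXdep]⟩
    obtain ⟨C₀, hC₀mem, hC₀min⟩ := Finset.exists_min_image _ Finset.card hne
    simp only [Finset.mem_filter, Finset.mem_powerset] at hC₀mem
    have hC₀circ : M.IsMinDep (↑C₀ : Set α) := by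
      refine ⟨hC₀mem.2, ?_⟩
      intro D hD hDdep
      have hDfin : D.Finite := C₀.finite_toSet.subset hD.subset
      have hmemf : hDfin.toFinset ∈ X.powerset.filter (fun s : Finset α => M.Dep (s : Set α)) := by
        rw [Finset.mem_filter, Finset.mem_powerset]
        constructor
        · rw [← Finset.coe_subset, hDfin.coe_toFinset]
          exact hD.subset.trans (Finset.coe_subset.mpr hC₀mem.1)
        · rw [hDfin.coe_toFinset]; exact hDdep
      have hmin := hC₀min _ hmemf
      have hlt : D.ncard < (↑C₀ : Set α).ncard := Set.ncard_lt_ncard hD C₀.finite_toSet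
      rw [Set.ncard_coe_finset, Set.ncard_eq_toFinset_card D hDfin] at hlt
      omega
    have heq := huniq _ hC₀circ (Finset.coe_subset.mpr hC₀mem.1)
    exact heq ▸ hC₀circ
  -- the hyperplane H = closure X and cocircuit Ds
  have hHsub : M.closure (X : Set α) ⊆ M.E := M.closure_subset_ground _
  set Ds : Set α := M.E \ M.closure (X : Set α) with hDsdef
  have hHne : M.closure (X : Set α) ≠ M.E := by
    intro h
    have hbI : M.IsBase I := hI.indep.isBase_of_ground_subset_closure
      (by rw [hI.closure_eq_closure, h])
    rw [hr, ← hbI.ncard_eq_ncard_of_isBase hB0] at hIcard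
    omega
  have hbase : ∀ y ∈ M.E \ M.closure (X : Set α), M.IsBase (insert y I) := by
    rintro y ⟨hyE, hyH⟩
    have hyI : y ∉ I := fun h => hyH (M.subset_closure _ hXE (hI.subset h))
    have hind : M.Indep (insert y I) := by
      rw [hI.indep.insert_indep_iff_of_notMem hyI]
      exact ⟨hyE, by rw [hI.closure_eq_closure]; exact hyH⟩
    obtain ⟨B', hB', hsub⟩ := hind.exists_isBase_superset
    have hcard : (insert y I).ncard = M.rkt := by
      rw [Set.ncard_insert_of_notMem hyI hIfin]; omega
    have hfinB' : B'.Finite := hfin.subset hB'.subset_ground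
    have heq : insert y I = B' := Set.eq_of_subset_of_ncard_le hsub
      (by rw [hcard, hr]; exact (hB'.ncard_eq_ncard_of_isBase hB0).le) hfinB'
    exact heq ▸ hB'
  have hXsubH : (X : Set α) ⊆ M.closure (X : Set α) := M.subset_closure _ hXE
  have hDsX : Ds ⊆ M.E \ (X : Set α) :=
    fun z hz => ⟨hz.1, fun hzX => hz.2 (hXsubH hzX)⟩
  -- Ds is a cocircuit
  have hDscirc : M✶.IsMinDep Ds := by
    constructor
    · refine ⟨?_, Set.diff_subset⟩
      intro hco
      have hsp := (Matroid.coindep_iff_compl_spanning Set.diff_subset).mp hco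
      rw [Set.diff_diff_cancel_left hHsub] at hsp
      have hcl := hsp.closure_eq
      rw [M.closure_closure] at hcl
      exact hHne hcl
    · intro D' hss
      have hD'E : D' ⊆ M.E := hss.subset.trans Set.diff_subset
      rw [Matroid.not_dep_iff (show D' ⊆ M✶.E from hD'E)]
      obtain ⟨y, hyD, hyD'⟩ := Set.exists_of_ssubset hss
      have hsp : M.Spanning (M.E \ D') := by
        rw [Matroid.spanning_iff_exists_isBase_subset Set.diff_subset]
        refine ⟨insert y I, hbase y hyD, Set.insert_subset ⟨hyD.1, hyD'⟩ ?_⟩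
        intro z hz
        have hzH : z ∈ M.closure (X : Set α) := hXsubH (hI.subset hz)
        exact ⟨hHsub hzH, fun hzD' => (hss.subset hzD').2 hzH⟩
      exact (Matroid.coindep_iff_compl_spanning hD'E).mpr hsp
  -- uniqueness of cocircuits avoiding X
  have hDuniq : ∀ D', M✶.IsMinDep D' → D' ⊆ M.E \ (X : Set α) → D' = Ds := by
    intro D' hD' hD'X
    have hD'E : D' ⊆ M.E := hD'X.trans Set.diff_subset
    have hXD' : (X : Set α) ⊆ M.E \ D' := fun z hz => ⟨hXE hz, fun h => (hD'X h).2 hz⟩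
    have hnsp : ¬ M.Spanning (M.E \ D') := fun hsp =>
      hD'.1.1 ((Matroid.coindep_iff_compl_spanning hD'E).mpr hsp)
    apply Set.Subset.antisymm
    · intro y hy
      refine ⟨hD'E hy, fun hyH => ?_⟩
      have hss : D' \ {y} ⊂ D' := Set.sdiff_singleton_ssubset.mpr hy
      have hind : M✶.Indep (D' \ {y}) := by
        have hnd := hD'.2 _ hss
        rwa [Matroid.not_dep_iff (show D' \ {y} ⊆ M✶.E from Set.diff_subset.trans hD'E)] at hnd
      have hsp2 : M.Spanning (M.E \ (D' \ {y})) :=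
        (Matroid.coindep_iff_compl_spanning (Set.diff_subset.trans hD'E)).mp hind
      have heq : M.E \ (D' \ {y}) = insert y (M.E \ D') := by
        rw [Set.diff_diff_right,
          Set.inter_eq_self_of_subset_right (Set.singleton_subset_iff.mpr (hD'E hy)),
          Set.union_singleton]
      have hycl : y ∈ M.closure (M.E \ D') := M.closure_subset_closure hXD' hyH
      have h1 : M.closure (insert y (M.E \ D')) = M.E := by
        rw [← heq]; exact hsp2.closure_eq
      rw [Matroid.closure_insert_eq_of_mem_closure hycl] at h1
      exact hnsp ⟨h1, Set.diff_subset⟩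
    · intro y hy
      by_contra hyD'
      apply hnsp
      rw [Matroid.spanning_iff_exists_isBase_subset Set.diff_subset]
      exact ⟨insert y I, hbase y hy,
        Set.insert_subset ⟨hy.1, hyD'⟩ (fun z hz => hXD' (hI.subset hz))⟩
  -- assemble
  refine ⟨Cs, Ds, ⟨hCscirc, fun y hy => hy.1⟩, huniq, ⟨hDscirc, hDsX⟩, hDuniq, ?_⟩
  intro e he f hf
  have heX : e ∈ (X : Set α) := he
  by_cases heC : e ∈ Cs
  · have hind : M.Indep ((X : Set α) \ {e}) := heC.2
    constructor
    · intro hdep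
      have hfcl : f ∈ M.closure (X : Set α) := by
        have h1 := (hind.insert_dep_iff.mp hdep).1
        rwa [hclCs e heC] at h1
      exact Or.inr ⟨hf, fun hfD => hfD.2 hfcl⟩
    · rintro (⟨_, heCs⟩ | ⟨_, hfD⟩)
      · exact absurd heC heCs
      · apply hind.insert_dep_iff.mpr
        refine ⟨?_, fun h => hf.2 h.1⟩
        rw [hclCs e heC]
        by_contra h
        exact hfD ⟨hf.1, h⟩
  · have hdep : M.Dep ((X : Set α) \ {e}) := by
      rw [← Matroid.not_indep_iff (Set.diff_subset.trans hXE)]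
      exact fun hind => heC ⟨heX, hind⟩
    constructor
    · intro _; exact Or.inl ⟨heX, heC⟩
    · intro _
      exact hdep.superset (Set.subset_insert _ _)
        (Set.insert_subset hf.1 (Set.diff_subset.trans hXE))
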